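/- Let G be a nontrivial additive subgroup of ℂ. The space of 1/2-derivations of the deformed generalized Heisenberg–Virasoro algebra g(G,−1) is two-dimensional, spanned by the identity map and the linear map φ determined on the basis by φ(I_0) = C_L and φ(L_a) = 0 for all a ∈ G, φ(I_a) = 0 for all a ∈ G with a ≠ 0, φ(C_L) = 0. That is, a linear map ψ : g(G,−1) → g(G,−1) is a 1/2-derivation if and only if there exist α, α' ∈ ℂ with ψ = α·Id + α'·φ. -/

import Mathlib

open scoped Classical

set_option linter.unusedSectionVars false
set_option maxHeartbeats 1000000

/-- Index set for the basis of the deformed generalized Heisenberg–Virasoro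
algebra `g(G, -1)`: vectors `L a`, `I a` for `a ∈ G` together with the
central element `C_L`. -/
inductive DGHVIdx (G : AddSubgroup ℂ) : Type
  | L : G → DGHVIdx G
  | I : G → DGHVIdx G
  | CL : DGHVIdx G

section Aux

theorem ext_basis_fun {ι R M N : Type*} [Semiring R] [AddCommMonoid M] [Module R M]
    [AddCommMonoid N] [Module R N] (b : Module.Basis ι R M) {f g : M → N}
    (hf : IsLinearMap R f) (hg : IsLinearMap R g)
    (h : ∀ i, f (b i) = g (b i)) (x : M) : f x = g x :=
  LinearMap.congr_fun (b.ext (f₁ := hf.mk' f) (f₂ := hg.mk' g) h) x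

variable {G : AddSubgroup ℂ} {Lg : Type*} [LieRing Lg] [LieAlgebra ℂ Lg]
    (bas : Module.Basis (DGHVIdx G) ℂ Lg)
    (hLL : ∀ a b : G, ⁅bas (DGHVIdx.L a), bas (DGHVIdx.L b)⁆ =
      ((b : ℂ) - (a : ℂ)) • bas (DGHVIdx.L (a + b)) +
        (if a + b = 0 then ((a : ℂ) ^ 3 - (a : ℂ)) / 12 else 0) • bas DGHVIdx.CL)
    (hLI : ∀ a b : G, ⁅bas (DGHVIdx.L a), bas (DGHVIdx.I b)⁆ =
      ((a : ℂ) + (b : ℂ)) • bas (DGHVIdx.I (a + b)))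
    (hII : ∀ a b : G, ⁅bas (DGHVIdx.I a), bas (DGHVIdx.I b)⁆ = 0)
    (hCL : ∀ x : Lg, ⁅bas DGHVIdx.CL, x⁆ = 0)

include hLL hLI hCL in
theorem repr_lieL_L (a j : G) (x : Lg) :
    bas.repr ⁅bas (DGHVIdx.L a), x⁆ (DGHVIdx.L j) =
      ((j : ℂ) - 2 * (a : ℂ)) * bas.repr x (DGHVIdx.L (j - a)) := by
  refine ext_basis_fun bas (f := fun y => bas.repr ⁅bas (DGHVIdx.L a), y⁆ (DGHVIdx.L j))
    (g := fun y => ((j : ℂ) - 2 * (a : ℂ)) * bas.repr y (DGHVIdx.L (j - a))) ?_ ?_ ?_ x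
  · constructor
    · intro u v; simp only [lie_add, map_add, Finsupp.add_apply]
    · intro r u; simp only [lie_smul, map_smul, Finsupp.smul_apply, smul_eq_mul]
  · constructor
    · intro u v; simp only [map_add, Finsupp.add_apply]; ring
    · intro r u; simp only [map_smul, Finsupp.smul_apply, smul_eq_mul]; ring
  · intro i
    cases i with
    | L c =>
      rw [hLL]
      simp only [map_add, map_smul, Finsupp.add_apply, Finsupp.smul_apply, Module.Basis.repr_self,
        smul_eq_mul, Finsupp.single_apply, reduceCtorEq, if_false, mul_zero, add_zero,
        DGHVIdx.L.injEq]
      by_cases h : c = j - a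
      · subst h
        have hidx : a + (j - a) = j := by abel
        simp only [hidx, if_pos rfl]
        push_cast
        ring
      · have h2 : ¬(a + c = j) := fun hh => h (by rw [← hh]; abel)
        rw [if_neg h2, if_neg h, mul_zero, mul_zero]
    | I c =>
      rw [hLI]
      simp [Finsupp.single_apply]
    | CL =>
      rw [← lie_skew, hCL, neg_zero]
      simp

include hLL hLI hII hCL in
theorem repr_lieL_I (a j : G) (x : Lg) :
    bas.repr ⁅bas (DGHVIdx.L a), x⁆ (DGHVIdx.I j) =
      (j : ℂ) * bas.repr x (DGHVIdx.I (j - a)) := by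
  refine ext_basis_fun bas (f := fun y => bas.repr ⁅bas (DGHVIdx.L a), y⁆ (DGHVIdx.I j))
    (g := fun y => (j : ℂ) * bas.repr y (DGHVIdx.I (j - a))) ?_ ?_ ?_ x
  · constructor
    · intro u v; simp only [lie_add, map_add, Finsupp.add_apply]
    · intro r u; simp only [lie_smul, map_smul, Finsupp.smul_apply, smul_eq_mul]
  · constructor
    · intro u v; simp only [map_add, Finsupp.add_apply]; ring
    · intro r u; simp only [map_smul, Finsupp.smul_apply, smul_eq_mul]; ring
  · intro i
    cases i with
    | L c =>
      rw [hLL]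
      split_ifs <;> simp [Finsupp.single_apply]
    | I c =>
      rw [hLI]
      simp only [map_smul, Finsupp.smul_apply, Module.Basis.repr_self, smul_eq_mul,
        Finsupp.single_apply, DGHVIdx.I.injEq]
      by_cases h : c = j - a
      · subst h
        have hidx : a + (j - a) = j := by abel
        simp only [hidx, if_pos rfl, mul_one]
        have : ((j - a : G) : ℂ) = (j : ℂ) - (a : ℂ) := by push_cast; ring
        rw [this]; ring
      · have h2 : ¬(a + c = j) := fun hh => h (by rw [← hh]; abel)
        rw [if_neg h2, if_neg h, mul_zero, mul_zero]
    | CL =>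
      rw [← lie_skew, hCL, neg_zero]
      simp

include hLL hLI hCL in
theorem repr_lieL_C (a : G) (x : Lg) :
    bas.repr ⁅bas (DGHVIdx.L a), x⁆ DGHVIdx.CL =
      (((a : ℂ) ^ 3 - (a : ℂ)) / 12) * bas.repr x (DGHVIdx.L (-a)) := by
  refine ext_basis_fun bas (f := fun y => bas.repr ⁅bas (DGHVIdx.L a), y⁆ DGHVIdx.CL)
    (g := fun y => (((a : ℂ) ^ 3 - (a : ℂ)) / 12) * bas.repr y (DGHVIdx.L (-a))) ?_ ?_ ?_ x
  · constructor
    · intro u v; simp only [lie_add, map_add, Finsupp.add_apply]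
    · intro r u; simp only [lie_smul, map_smul, Finsupp.smul_apply, smul_eq_mul]
  · constructor
    · intro u v; simp only [map_add, Finsupp.add_apply]; ring
    · intro r u; simp only [map_smul, Finsupp.smul_apply, smul_eq_mul]; ring
  · intro i
    cases i with
    | L c =>
      rw [hLL]
      simp only [map_add, map_smul, Finsupp.add_apply, Finsupp.smul_apply, Module.Basis.repr_self,
        smul_eq_mul, Finsupp.single_apply, reduceCtorEq, if_false, mul_zero, zero_add,
        DGHVIdx.L.injEq]
      by_cases h : c = -a
      · subst h
        have hidx : a + (-a) = 0 := by abel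
        simp [hidx]
      · have h2 : ¬(a + c = 0) := fun hh => h (eq_neg_of_add_eq_zero_right hh)
        simp [h, h2]
    | I c =>
      rw [hLI]
      simp [Finsupp.single_apply]
    | CL =>
      rw [← lie_skew, hCL, neg_zero]
      simp

include hLI hII hCL in
theorem repr_lieI_I (a j : G) (x : Lg) :
    bas.repr ⁅x, bas (DGHVIdx.I a)⁆ (DGHVIdx.I j) =
      (j : ℂ) * bas.repr x (DGHVIdx.L (j - a)) := by
  refine ext_basis_fun bas (f := fun y => bas.repr ⁅y, bas (DGHVIdx.I a)⁆ (DGHVIdx.I j))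
    (g := fun y => (j : ℂ) * bas.repr y (DGHVIdx.L (j - a))) ?_ ?_ ?_ x
  · constructor
    · intro u v; simp only [add_lie, map_add, Finsupp.add_apply]
    · intro r u; simp only [smul_lie, map_smul, Finsupp.smul_apply, smul_eq_mul]
  · constructor
    · intro u v; simp only [map_add, Finsupp.add_apply]; ring
    · intro r u; simp only [map_smul, Finsupp.smul_apply, smul_eq_mul]; ring
  · intro i
    cases i with
    | L c =>
      rw [hLI]
      simp only [map_smul, Finsupp.smul_apply, Module.Basis.repr_self, smul_eq_mul,
        Finsupp.single_apply, DGHVIdx.I.injEq, DGHVIdx.L.injEq]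
      by_cases h : c = j - a
      · subst h
        have hidx : (j - a) + a = j := by abel
        simp only [hidx, if_pos rfl, mul_one]
        have : ((j - a : G) : ℂ) = (j : ℂ) - (a : ℂ) := by push_cast; ring
        rw [this]; ring
      · have h2 : ¬(c + a = j) := fun hh => h (by rw [← hh]; abel)
        rw [if_neg h2, if_neg h, mul_zero, mul_zero]
    | I c =>
      rw [hII]
      simp
    | CL =>
      rw [hCL]
      simp

include hLI hII hCL in
theorem repr_lieI_L (a j : G) (x : Lg) :
    bas.repr ⁅x, bas (DGHVIdx.I a)⁆ (DGHVIdx.L j) = 0 := by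
  refine ext_basis_fun bas (f := fun y => bas.repr ⁅y, bas (DGHVIdx.I a)⁆ (DGHVIdx.L j))
    (g := fun _ => 0) ?_ ?_ ?_ x
  · constructor
    · intro u v; simp only [add_lie, map_add, Finsupp.add_apply]
    · intro r u; simp only [smul_lie, map_smul, Finsupp.smul_apply, smul_eq_mul]
  · constructor
    · intro u v; simp
    · intro r u; simp
  · intro i
    cases i with
    | L c => rw [hLI]; simp [Finsupp.single_apply]
    | I c => rw [hII]; simp
    | CL => rw [hCL]; simp

include hLI hII hCL in
theorem repr_lieI_C (a : G) (x : Lg) :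
    bas.repr ⁅x, bas (DGHVIdx.I a)⁆ DGHVIdx.CL = 0 := by
  refine ext_basis_fun bas (f := fun y => bas.repr ⁅y, bas (DGHVIdx.I a)⁆ DGHVIdx.CL)
    (g := fun _ => 0) ?_ ?_ ?_ x
  · constructor
    · intro u v; simp only [add_lie, map_add, Finsupp.add_apply]
    · intro r u; simp only [smul_lie, map_smul, Finsupp.smul_apply, smul_eq_mul]
  · constructor
    · intro u v; simp
    · intro r u; simp
  · intro i
    cases i with
    | L c => rw [hLI]; simp [Finsupp.single_apply]
    | I c => rw [hII]; simp
    | CL => rw [hCL]; simp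

variable (ψ : Lg →ₗ[ℂ] Lg)
variable (hψ : ∀ x y : Lg, ψ ⁅x, y⁆ = (1 / 2 : ℂ) • (⁅ψ x, y⁆ + ⁅x, ψ y⁆))

include hLL hLI hII hCL hψ in
theorem eqEII (a b j : G) :
    ((a : ℂ) + (b : ℂ)) * bas.repr (ψ (bas (DGHVIdx.I (a + b)))) (DGHVIdx.I j) =
      (1 / 2 : ℂ) * ((j : ℂ) * bas.repr (ψ (bas (DGHVIdx.L a))) (DGHVIdx.L (j - b)) +
        (j : ℂ) * bas.repr (ψ (bas (DGHVIdx.I b))) (DGHVIdx.I (j - a))) := by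
  have h := hψ (bas (DGHVIdx.L a)) (bas (DGHVIdx.I b))
  rw [hLI] at h
  have h2 := congrArg (fun v => bas.repr v (DGHVIdx.I j)) h
  simp only [map_smul, map_add, Finsupp.smul_apply, Finsupp.add_apply, smul_eq_mul,
    repr_lieI_I bas hLI hII hCL, repr_lieL_I bas hLL hLI hII hCL] at h2
  linear_combination h2

include hLL hLI hII hCL hψ in
theorem eqEIL (a b j : G) :
    ((a : ℂ) + (b : ℂ)) * bas.repr (ψ (bas (DGHVIdx.I (a + b)))) (DGHVIdx.L j) =
      (1 / 2 : ℂ) * (((j : ℂ) - 2 * (a : ℂ)) * bas.repr (ψ (bas (DGHVIdx.I b))) (DGHVIdx.L (j - a))) := by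
  have h := hψ (bas (DGHVIdx.L a)) (bas (DGHVIdx.I b))
  rw [hLI] at h
  have h2 := congrArg (fun v => bas.repr v (DGHVIdx.L j)) h
  simp only [map_smul, map_add, Finsupp.smul_apply, Finsupp.add_apply, smul_eq_mul,
    repr_lieI_L bas hLI hII hCL, repr_lieL_L bas hLL hLI hCL] at h2
  linear_combination h2

include hLL hLI hII hCL hψ in
theorem eqEIC (a b : G) :
    ((a : ℂ) + (b : ℂ)) * bas.repr (ψ (bas (DGHVIdx.I (a + b)))) DGHVIdx.CL =
      (1 / 2 : ℂ) * ((((a : ℂ) ^ 3 - (a : ℂ)) / 12) * bas.repr (ψ (bas (DGHVIdx.I b))) (DGHVIdx.L (-a))) := by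
  have h := hψ (bas (DGHVIdx.L a)) (bas (DGHVIdx.I b))
  rw [hLI] at h
  have h2 := congrArg (fun v => bas.repr v DGHVIdx.CL) h
  simp only [map_smul, map_add, Finsupp.smul_apply, Finsupp.add_apply, smul_eq_mul,
    repr_lieI_C bas hLI hII hCL, repr_lieL_C bas hLL hLI hCL] at h2
  linear_combination h2

include hLL hLI hII hCL hψ in
theorem eqELL (a b j : G) :
    ((b : ℂ) - (a : ℂ)) * bas.repr (ψ (bas (DGHVIdx.L (a + b)))) (DGHVIdx.L j) +
      (if a + b = 0 then ((a : ℂ) ^ 3 - (a : ℂ)) / 12 else 0) * bas.repr (ψ (bas DGHVIdx.CL)) (DGHVIdx.L j) =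
      (1 / 2 : ℂ) * (-(((j : ℂ) - 2 * (b : ℂ)) * bas.repr (ψ (bas (DGHVIdx.L a))) (DGHVIdx.L (j - b))) +
        ((j : ℂ) - 2 * (a : ℂ)) * bas.repr (ψ (bas (DGHVIdx.L b))) (DGHVIdx.L (j - a))) := by
  have h := hψ (bas (DGHVIdx.L a)) (bas (DGHVIdx.L b))
  rw [hLL, show ⁅ψ (bas (DGHVIdx.L a)), bas (DGHVIdx.L b)⁆ =
    -⁅bas (DGHVIdx.L b), ψ (bas (DGHVIdx.L a))⁆ from (lie_skew _ _).symm] at h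
  have h2 := congrArg (fun v => bas.repr v (DGHVIdx.L j)) h
  simp only [map_smul, map_add, map_neg, Finsupp.smul_apply, Finsupp.add_apply,
    Finsupp.neg_apply, smul_eq_mul, repr_lieL_L bas hLL hLI hCL] at h2
  linear_combination h2

include hLL hLI hII hCL hψ in
theorem eqELI (a b j : G) :
    ((b : ℂ) - (a : ℂ)) * bas.repr (ψ (bas (DGHVIdx.L (a + b)))) (DGHVIdx.I j) +
      (if a + b = 0 then ((a : ℂ) ^ 3 - (a : ℂ)) / 12 else 0) * bas.repr (ψ (bas DGHVIdx.CL)) (DGHVIdx.I j) =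
      (1 / 2 : ℂ) * (-((j : ℂ) * bas.repr (ψ (bas (DGHVIdx.L a))) (DGHVIdx.I (j - b))) +
        (j : ℂ) * bas.repr (ψ (bas (DGHVIdx.L b))) (DGHVIdx.I (j - a))) := by
  have h := hψ (bas (DGHVIdx.L a)) (bas (DGHVIdx.L b))
  rw [hLL, show ⁅ψ (bas (DGHVIdx.L a)), bas (DGHVIdx.L b)⁆ =
    -⁅bas (DGHVIdx.L b), ψ (bas (DGHVIdx.L a))⁆ from (lie_skew _ _).symm] at h
  have h2 := congrArg (fun v => bas.repr v (DGHVIdx.I j)) h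
  simp only [map_smul, map_add, map_neg, Finsupp.smul_apply, Finsupp.add_apply,
    Finsupp.neg_apply, smul_eq_mul, repr_lieL_I bas hLL hLI hII hCL] at h2
  linear_combination h2

include hLL hLI hII hCL hψ in
theorem eqELC (a b : G) :
    ((b : ℂ) - (a : ℂ)) * bas.repr (ψ (bas (DGHVIdx.L (a + b)))) DGHVIdx.CL +
      (if a + b = 0 then ((a : ℂ) ^ 3 - (a : ℂ)) / 12 else 0) * bas.repr (ψ (bas DGHVIdx.CL)) DGHVIdx.CL =
      (1 / 2 : ℂ) * (-((((b : ℂ) ^ 3 - (b : ℂ)) / 12) * bas.repr (ψ (bas (DGHVIdx.L a))) (DGHVIdx.L (-b))) +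
        (((a : ℂ) ^ 3 - (a : ℂ)) / 12) * bas.repr (ψ (bas (DGHVIdx.L b))) (DGHVIdx.L (-a))) := by
  have h := hψ (bas (DGHVIdx.L a)) (bas (DGHVIdx.L b))
  rw [hLL, show ⁅ψ (bas (DGHVIdx.L a)), bas (DGHVIdx.L b)⁆ =
    -⁅bas (DGHVIdx.L b), ψ (bas (DGHVIdx.L a))⁆ from (lie_skew _ _).symm] at h
  have h2 := congrArg (fun v => bas.repr v DGHVIdx.CL) h
  simp only [map_smul, map_add, map_neg, Finsupp.smul_apply, Finsupp.add_apply,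
    Finsupp.neg_apply, smul_eq_mul, repr_lieL_C bas hLL hLI hCL] at h2
  linear_combination h2

include hCL hψ in
theorem eqEC (y : Lg) : ⁅ψ (bas DGHVIdx.CL), y⁆ = 0 := by
  have h := hψ (bas DGHVIdx.CL) y
  rw [hCL y, hCL (ψ y), map_zero, add_zero] at h
  have h2 : ((1:ℂ)/2) • ⁅ψ (bas DGHVIdx.CL), y⁆ = 0 := h.symm
  rcases smul_eq_zero.mp h2 with h3 | h3
  · norm_num at h3
  · exact h3

end Aux

/-- the `1/2`-derivations of `g(G, -1)` are exactly the linear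
combinations of the identity map and the map `φ` with `φ(I_0) = C_L` and `φ`
vanishing on all other basis vectors. -/
theorem halfDerivation_dgHV_neg_one_iff
    (G : AddSubgroup ℂ) [Nontrivial G]
    (Lg : Type*) [LieRing Lg] [LieAlgebra ℂ Lg]
    (bas : Module.Basis (DGHVIdx G) ℂ Lg)
    (hLL : ∀ a b : G, ⁅bas (DGHVIdx.L a), bas (DGHVIdx.L b)⁆ =
      ((b : ℂ) - (a : ℂ)) • bas (DGHVIdx.L (a + b)) +
        (if a + b = 0 then ((a : ℂ) ^ 3 - (a : ℂ)) / 12 else 0) • bas DGHVIdx.CL)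
    (hLI : ∀ a b : G, ⁅bas (DGHVIdx.L a), bas (DGHVIdx.I b)⁆ =
      ((a : ℂ) + (b : ℂ)) • bas (DGHVIdx.I (a + b)))
    (hII : ∀ a b : G, ⁅bas (DGHVIdx.I a), bas (DGHVIdx.I b)⁆ = 0)
    (hCL : ∀ x : Lg, ⁅bas DGHVIdx.CL, x⁆ = 0)
    (ψ : Lg →ₗ[ℂ] Lg) :
    (∀ x y : Lg, ψ ⁅x, y⁆ = (1 / 2 : ℂ) • (⁅ψ x, y⁆ + ⁅x, ψ y⁆)) ↔
      ∃ α α' : ℂ, ψ = α • (LinearMap.id : Lg →ₗ[ℂ] Lg) +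
        α' • (bas.constr ℂ (fun idx => match idx with
          | DGHVIdx.L _ => 0
          | DGHVIdx.I a => if a = 0 then bas DGHVIdx.CL else 0
          | DGHVIdx.CL => 0)) := by
  have hxCL : ∀ x : Lg, ⁅x, bas DGHVIdx.CL⁆ = 0 := fun x => by
    rw [← lie_skew, hCL, neg_zero]
  constructor
  · intro hψ
    obtain ⟨g, hg⟩ := exists_ne (0 : G)
    have hgC : (g : ℂ) ≠ 0 := fun h => hg (ZeroMemClass.coe_eq_zero.mp h)
    -- ψ(CL) is central-ish: its bracket with everything vanishes
    have hbr : ∀ a : G, ⁅bas (DGHVIdx.L a), ψ (bas DGHVIdx.CL)⁆ = 0 := fun a => by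
      rw [← lie_skew, eqEC bas hCL ψ hψ (bas (DGHVIdx.L a)), neg_zero]
    have hZcompL : ∀ a j : G, ((j : ℂ) - 2 * (a : ℂ)) * bas.repr (ψ (bas (DGHVIdx.CL))) (DGHVIdx.L (j - a)) = 0 := by
      intro a j
      have h := congrArg (fun v => bas.repr v (DGHVIdx.L j)) (hbr a)
      simpa only [map_zero, Finsupp.zero_apply, repr_lieL_L bas hLL hLI hCL] using h
    have hZcompI : ∀ a j : G, (j : ℂ) * bas.repr (ψ (bas (DGHVIdx.CL))) (DGHVIdx.I (j - a)) = 0 := by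
      intro a j
      have h := congrArg (fun v => bas.repr v (DGHVIdx.I j)) (hbr a)
      simpa only [map_zero, Finsupp.zero_apply, repr_lieL_I bas hLL hLI hII hCL] using h
    have hZL : ∀ j : G, bas.repr (ψ (bas (DGHVIdx.CL))) (DGHVIdx.L (j)) = 0 := by
      intro j
      by_cases hj : j = 0
      · subst hj
        have h := hZcompL g g
        rw [sub_self] at h
        have h' : (g : ℂ) * bas.repr (ψ (bas (DGHVIdx.CL))) (DGHVIdx.L (0)) = 0 := by linear_combination -h
        exact (mul_eq_zero.mp h').resolve_left hgC
      · have h := hZcompL 0 j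
        rw [sub_zero] at h
        push_cast at h
        have h' : (j : ℂ) * bas.repr (ψ (bas (DGHVIdx.CL))) (DGHVIdx.L (j)) = 0 := by linear_combination h
        exact (mul_eq_zero.mp h').resolve_left (fun hh => hj (ZeroMemClass.coe_eq_zero.mp hh))
    have hZI : ∀ j : G, bas.repr (ψ (bas (DGHVIdx.CL))) (DGHVIdx.I (j)) = 0 := by
      intro j
      by_cases hj : j = 0
      · subst hj
        have h := hZcompI g g
        rw [sub_self] at h
        exact (mul_eq_zero.mp h).resolve_left hgC
      · have h := hZcompI 0 j
        rw [sub_zero] at h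
        exact (mul_eq_zero.mp h).resolve_left (fun hh => hj (ZeroMemClass.coe_eq_zero.mp hh))
    -- off-diagonal coefficients of ψ(L₀)
    have hPL0 : ∀ b : G, b ≠ 0 → bas.repr (ψ (bas (DGHVIdx.L (0)))) (DGHVIdx.L (b)) = 0 := by
      intro b hb
      have h := eqEII bas hLL hLI hII hCL ψ hψ 0 b (b + b)
      simp only [zero_add, add_sub_cancel_right, sub_zero] at h
      push_cast at h
      have hbC : (b : ℂ) ≠ 0 := fun hh => hb (ZeroMemClass.coe_eq_zero.mp hh)
      have h' : (b : ℂ) * bas.repr (ψ (bas (DGHVIdx.L (0)))) (DGHVIdx.L (b)) = 0 := by linear_combination -h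
      exact (mul_eq_zero.mp h').resolve_left hbC
    -- coefficients of ψ(I_b) on the I-side
    have hQ1 : ∀ b j : G, j ≠ b → j ≠ b + b → bas.repr (ψ (bas (DGHVIdx.I (b)))) (DGHVIdx.I (j)) = 0 := by
      intro b j h1 h2
      have h := eqEII bas hLL hLI hII hCL ψ hψ 0 b j
      simp only [zero_add, sub_zero] at h
      push_cast at h
      rw [hPL0 (j - b) (fun hh => h1 (sub_eq_zero.mp hh))] at h
      have hco : ((b : ℂ) + b - j) ≠ 0 := by
        intro hh
        apply h2
        have hc : ((b + b : G) : ℂ) = (j : ℂ) := by push_cast; linear_combination hh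
        exact ((by exact_mod_cast hc : b + b = j)).symm
      have h' : ((b : ℂ) + b - j) * bas.repr (ψ (bas (DGHVIdx.I (b)))) (DGHVIdx.I (j)) = 0 := by linear_combination 2 * h
      exact (mul_eq_zero.mp h').resolve_left hco
    have hQ2 : ∀ b : G, b ≠ 0 → bas.repr (ψ (bas (DGHVIdx.I (b)))) (DGHVIdx.I (b)) = bas.repr (ψ (bas (DGHVIdx.L (0)))) (DGHVIdx.L (0)) := by
      intro b hb
      have h := eqEII bas hLL hLI hII hCL ψ hψ 0 b b
      simp only [zero_add, sub_self, sub_zero] at h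
      push_cast at h
      have hbC : (b : ℂ) ≠ 0 := fun hh => hb (ZeroMemClass.coe_eq_zero.mp hh)
      have h' : (b : ℂ) * (bas.repr (ψ (bas (DGHVIdx.I (b)))) (DGHVIdx.I (b)) - bas.repr (ψ (bas (DGHVIdx.L (0)))) (DGHVIdx.L (0))) = 0 := by linear_combination 2 * h
      have := (mul_eq_zero.mp h').resolve_left hbC
      exact sub_eq_zero.mp this
    have hQ3 : ∀ j : G, j ≠ 0 → bas.repr (ψ (bas (DGHVIdx.I (0)))) (DGHVIdx.I (j)) = 0 := by
      intro j hj
      have h := eqEII bas hLL hLI hII hCL ψ hψ 0 0 j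
      simp only [zero_add, add_zero, sub_zero] at h
      push_cast at h
      rw [hPL0 j hj] at h
      have hjC : (j : ℂ) ≠ 0 := fun hh => hj (ZeroMemClass.coe_eq_zero.mp hh)
      have h' : (j : ℂ) * bas.repr (ψ (bas (DGHVIdx.I (0)))) (DGHVIdx.I (j)) = 0 := by linear_combination -2 * h
      exact (mul_eq_zero.mp h').resolve_left hjC
    -- coefficients of ψ(L_b) on the L-side, off the doubled diagonal
    have hPLb : ∀ b j : G, j ≠ b + b → bas.repr (ψ (bas (DGHVIdx.L (b)))) (DGHVIdx.L (j)) = if j = b then bas.repr (ψ (bas (DGHVIdx.L (0)))) (DGHVIdx.L (0)) else 0 := by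
      intro b j hjd
      have h := eqELL bas hLL hLI hII hCL ψ hψ 0 b j
      rw [hZL j] at h
      simp only [zero_add, sub_zero] at h
      push_cast at h
      have hco : ((b : ℂ) + b - j) ≠ 0 := by
        intro hh
        apply hjd
        have hc : ((b + b : G) : ℂ) = (j : ℂ) := by push_cast; linear_combination hh
        exact ((by exact_mod_cast hc : b + b = j)).symm
      by_cases hjb : j = b
      · subst hjb
        rw [sub_self] at h
        rw [if_pos rfl]
        have h' : ((j : ℂ) + j - j) * (bas.repr (ψ (bas (DGHVIdx.L (j)))) (DGHVIdx.L (j)) - bas.repr (ψ (bas (DGHVIdx.L (0)))) (DGHVIdx.L (0))) = 0 := by linear_combination 2 * h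
        have := (mul_eq_zero.mp h').resolve_left hco
        exact sub_eq_zero.mp this
      · rw [hPL0 (j - b) (fun hh => hjb (sub_eq_zero.mp hh))] at h
        rw [if_neg hjb]
        have h' : ((b : ℂ) + b - j) * bas.repr (ψ (bas (DGHVIdx.L (b)))) (DGHVIdx.L (j)) = 0 := by linear_combination 2 * h
        exact (mul_eq_zero.mp h').resolve_left hco
    have hPLd : ∀ b : G, b ≠ 0 → bas.repr (ψ (bas (DGHVIdx.L (b)))) (DGHVIdx.L (b + b)) = 0 := by
      intro b hb
      have hbC : (b : ℂ) ≠ 0 := fun hh => hb (ZeroMemClass.coe_eq_zero.mp hh)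
      have h := eqEII bas hLL hLI hII hCL ψ hψ b (-b) b
      rw [add_neg_cancel, sub_neg_eq_add, sub_self] at h
      push_cast at h
      have hI0 : bas.repr (ψ (bas (DGHVIdx.I (-b)))) (DGHVIdx.I (0)) = 0 := by
        refine hQ1 (-b) 0 (fun hh => hb (neg_eq_zero.mp hh.symm)) ?_
        intro hh
        apply hb
        have h0 : ((-b + -b : G) : ℂ) = 0 := by rw [← hh]; simp
        push_cast at h0
        have hb0 : (b : ℂ) = 0 := by linear_combination -h0 / 2
        exact ZeroMemClass.coe_eq_zero.mp hb0
      rw [hI0] at h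
      have h' : (b : ℂ) * bas.repr (ψ (bas (DGHVIdx.L (b)))) (DGHVIdx.L (b + b)) = 0 := by linear_combination -2 * h
      exact (mul_eq_zero.mp h').resolve_left hbC
    have hPL : ∀ b j : G, bas.repr (ψ (bas (DGHVIdx.L (b)))) (DGHVIdx.L (j)) = if j = b then bas.repr (ψ (bas (DGHVIdx.L (0)))) (DGHVIdx.L (0)) else 0 := by
      intro b j
      by_cases hd : j = b + b
      · subst hd
        by_cases hb0 : b = 0
        · subst hb0
          rw [add_zero, if_pos rfl]
        · rw [hPLd b hb0, if_neg (fun hh => hb0 (add_eq_left.mp hh))]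
      · exact hPLb b j hd
    have hQId : ∀ b : G, b ≠ 0 → bas.repr (ψ (bas (DGHVIdx.I (b)))) (DGHVIdx.I (b + b)) = 0 := by
      intro b hb
      have hbC : (b : ℂ) ≠ 0 := fun hh => hb (ZeroMemClass.coe_eq_zero.mp hh)
      have h := eqEII bas hLL hLI hII hCL ψ hψ b 0 (b + b)
      rw [add_zero, sub_zero, add_sub_cancel_right] at h
      push_cast at h
      rw [hPLd b hb, hQ3 b hb] at h
      have h' : (b : ℂ) * bas.repr (ψ (bas (DGHVIdx.I (b)))) (DGHVIdx.I (b + b)) = 0 := by linear_combination h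
      exact (mul_eq_zero.mp h').resolve_left hbC
    have hβ : bas.repr (ψ (bas (DGHVIdx.I (0)))) (DGHVIdx.I (0)) = bas.repr (ψ (bas (DGHVIdx.L (0)))) (DGHVIdx.L (0)) := by
      have h := eqEII bas hLL hLI hII hCL ψ hψ g 0 g
      rw [add_zero, sub_zero, sub_self] at h
      push_cast at h
      rw [hQ2 g hg, hPL g g, if_pos rfl] at h
      have h' : (g : ℂ) * (bas.repr (ψ (bas (DGHVIdx.I (0)))) (DGHVIdx.I (0)) - bas.repr (ψ (bas (DGHVIdx.L (0)))) (DGHVIdx.L (0))) = 0 := by linear_combination -2 * h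
      have := (mul_eq_zero.mp h').resolve_left hgC
      exact sub_eq_zero.mp this
    have hQI : ∀ b j : G, bas.repr (ψ (bas (DGHVIdx.I (b)))) (DGHVIdx.I (j)) = if j = b then bas.repr (ψ (bas (DGHVIdx.L (0)))) (DGHVIdx.L (0)) else 0 := by
      intro b j
      by_cases hjb : j = b
      · subst hjb
        rw [if_pos rfl]
        by_cases hb0 : j = 0
        · subst hb0; exact hβ
        · exact hQ2 j hb0
      · rw [if_neg hjb]
        by_cases hd : j = b + b
        · have hb0 : b ≠ 0 := fun hh => hjb (by rw [hd, hh, add_zero])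
          rw [hd]; exact hQId b hb0
        · exact hQ1 b j hjb hd
    -- coefficients of ψ(I_b) on the L-side vanish
    have hQLoff : ∀ b j : G, j ≠ b + b → bas.repr (ψ (bas (DGHVIdx.I (b)))) (DGHVIdx.L (j)) = 0 := by
      intro b j hd
      have h := eqEIL bas hLL hLI hII hCL ψ hψ 0 b j
      simp only [zero_add, sub_zero] at h
      push_cast at h
      have hco : ((b : ℂ) + b - j) ≠ 0 := by
        intro hh
        apply hd
        have hc : ((b + b : G) : ℂ) = (j : ℂ) := by push_cast; linear_combination hh
        exact ((by exact_mod_cast hc : b + b = j)).symm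
      have h' : ((b : ℂ) + b - j) * bas.repr (ψ (bas (DGHVIdx.I (b)))) (DGHVIdx.L (j)) = 0 := by linear_combination 2 * h
      exact (mul_eq_zero.mp h').resolve_left hco
    have hQLd : ∀ a : G, a ≠ 0 → bas.repr (ψ (bas (DGHVIdx.I (a)))) (DGHVIdx.L (a + a)) = 0 := by
      intro a ha
      have haC : (a : ℂ) ≠ 0 := fun hh => ha (ZeroMemClass.coe_eq_zero.mp hh)
      have h := eqEIL bas hLL hLI hII hCL ψ hψ a 0 (a + a)
      rw [add_zero, add_sub_cancel_right] at h
      push_cast at h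
      have h' : (a : ℂ) * bas.repr (ψ (bas (DGHVIdx.I (a)))) (DGHVIdx.L (a + a)) = 0 := by linear_combination h
      exact (mul_eq_zero.mp h').resolve_left haC
    have hQL : ∀ b j : G, bas.repr (ψ (bas (DGHVIdx.I (b)))) (DGHVIdx.L (j)) = 0 := by
      intro b j
      by_cases hb0 : b = 0
      · subst hb0
        by_cases hj0 : j = 0
        · subst hj0
          have h := eqEIL bas hLL hLI hII hCL ψ hψ g 0 g
          rw [add_zero, sub_self] at h
          push_cast at h
          have hgg : bas.repr (ψ (bas (DGHVIdx.I (g)))) (DGHVIdx.L (g)) = 0 := by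
            refine hQLoff g g ?_
            intro hh
            exact hg (add_eq_left.mp hh.symm)
          rw [hgg] at h
          have h' : (g : ℂ) * bas.repr (ψ (bas (DGHVIdx.I (0)))) (DGHVIdx.L (0)) = 0 := by linear_combination 2 * h
          exact (mul_eq_zero.mp h').resolve_left hgC
        · refine hQLoff 0 j ?_
          rw [add_zero]
          exact hj0
      · by_cases hd : j = b + b
        · rw [hd]; exact hQLd b hb0
        · exact hQLoff b j hd
    have hQC : ∀ b : G, b ≠ 0 → bas.repr (ψ (bas (DGHVIdx.I (b)))) (DGHVIdx.CL) = 0 := by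
      intro b hb
      have hbC : (b : ℂ) ≠ 0 := fun hh => hb (ZeroMemClass.coe_eq_zero.mp hh)
      have h := eqEIC bas hLL hLI hII hCL ψ hψ 0 b
      simp only [zero_add] at h
      push_cast at h
      have h' : (b : ℂ) * bas.repr (ψ (bas (DGHVIdx.I (b)))) (DGHVIdx.CL) = 0 := by linear_combination h
      exact (mul_eq_zero.mp h').resolve_left hbC
    -- the I-side coefficients of ψ(L_b) vanish
    have hPI1 : ∀ b j : G, ((b : ℂ) + b - j) * bas.repr (ψ (bas (DGHVIdx.L (b)))) (DGHVIdx.I (j)) = -(j : ℂ) * bas.repr (ψ (bas (DGHVIdx.L (0)))) (DGHVIdx.I (j - b)) := by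
      intro b j
      have h := eqELI bas hLL hLI hII hCL ψ hψ 0 b j
      rw [hZI j] at h
      simp only [zero_add, sub_zero] at h
      push_cast at h
      linear_combination 2 * h
    have hs : ∀ j : G, bas.repr (ψ (bas (DGHVIdx.L (0)))) (DGHVIdx.I (j)) = 0 := by
      intro j
      have e3 := eqELI bas hLL hLI hII hCL ψ hψ g (-g) j
      rw [add_neg_cancel, hZI j, sub_neg_eq_add] at e3
      push_cast at e3
      have e1 := hPI1 (-g) (j - g)
      have hx1 : j - g - -g = j := by abel
      rw [hx1] at e1
      push_cast at e1
      have e2 := hPI1 g (j + g)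
      rw [add_sub_cancel_right] at e2
      push_cast at e2
      have h4 : 4 * (g : ℂ) ^ 3 * bas.repr (ψ (bas (DGHVIdx.L (0)))) (DGHVIdx.I (j)) = 0 := by
        linear_combination (-(j : ℂ) * ((j : ℂ) - (g : ℂ))) * e1 +
          ((j : ℂ) * ((j : ℂ) + (g : ℂ))) * e2 + (2 * ((j : ℂ) ^ 2 - (g : ℂ) ^ 2)) * e3
      have hco : (4 : ℂ) * (g : ℂ) ^ 3 ≠ 0 :=
        mul_ne_zero (by norm_num) (pow_ne_zero 3 hgC)
      exact (mul_eq_zero.mp h4).resolve_left hco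
    have hPIoff : ∀ b j : G, j ≠ b + b → bas.repr (ψ (bas (DGHVIdx.L (b)))) (DGHVIdx.I (j)) = 0 := by
      intro b j hd
      have h := hPI1 b j
      rw [hs (j - b)] at h
      have hco : ((b : ℂ) + b - j) ≠ 0 := by
        intro hh
        apply hd
        have hc : ((b + b : G) : ℂ) = (j : ℂ) := by push_cast; linear_combination hh
        exact ((by exact_mod_cast hc : b + b = j)).symm
      have h' : ((b : ℂ) + b - j) * bas.repr (ψ (bas (DGHVIdx.L (b)))) (DGHVIdx.I (j)) = 0 := by linear_combination h
      exact (mul_eq_zero.mp h').resolve_left hco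
    have hPIdiagkey : ∀ a a' : G, a' ≠ 0 → a' ≠ a → ((a : ℂ) - 2 * (a' : ℂ)) ≠ 0 →
        bas.repr (ψ (bas (DGHVIdx.L (a)))) (DGHVIdx.I (a + a)) = 0 := by
      intro a a' ha'0 ha'a hco
      have h := eqELI bas hLL hLI hII hCL ψ hψ a' (a - a') (a + a)
      have hidx1 : a' + (a - a') = a := by abel
      have hidx2 : a + a - (a - a') = a + a' := by abel
      rw [hidx1, hidx2, hZI (a + a)] at h
      have hz1 : bas.repr (ψ (bas (DGHVIdx.L (a')))) (DGHVIdx.I (a + a')) = 0 := by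
        refine hPIoff a' (a + a') ?_
        intro hh
        exact ha'a (add_right_cancel hh).symm
      have hz2 : bas.repr (ψ (bas (DGHVIdx.L (a - a')))) (DGHVIdx.I (a + a - a')) = 0 := by
        refine hPIoff (a - a') (a + a - a') ?_
        intro hh
        apply ha'0
        have hc : ((a + a - a' : G) : ℂ) = (((a - a') + (a - a') : G) : ℂ) := by
          exact congrArg (fun t : G => (t : ℂ)) hh
        push_cast at hc
        have : (a' : ℂ) = 0 := by linear_combination hc
        exact ZeroMemClass.coe_eq_zero.mp this
      rw [hz1, hz2] at h
      push_cast at h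
      have h' : ((a : ℂ) - 2 * (a' : ℂ)) * bas.repr (ψ (bas (DGHVIdx.L (a)))) (DGHVIdx.I (a + a)) = 0 := by linear_combination h
      exact (mul_eq_zero.mp h').resolve_left hco
    have hPIdiag : ∀ a : G, a ≠ 0 → bas.repr (ψ (bas (DGHVIdx.L (a)))) (DGHVIdx.I (a + a)) = 0 := by
      intro a ha
      by_cases h1 : a = g
      · refine hPIdiagkey a (g + g) ?_ ?_ ?_
        · intro hh
          apply hg
          have h0 : ((g + g : G) : ℂ) = 0 := by rw [hh]; simp
          push_cast at h0
          have : (g : ℂ) = 0 := by linear_combination h0 / 2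
          exact ZeroMemClass.coe_eq_zero.mp this
        · rw [h1]
          intro hh
          exact hg (add_eq_left.mp hh)
        · rw [h1]
          push_cast
          intro hh
          apply hgC
          linear_combination -hh / 3
      · by_cases h2 : a = g + g
        · refine hPIdiagkey a (g + g + g) ?_ ?_ ?_
          · intro hh
            apply hg
            have h0 : ((g + g + g : G) : ℂ) = 0 := by rw [hh]; simp
            push_cast at h0
            have : (g : ℂ) = 0 := by linear_combination h0 / 3
            exact ZeroMemClass.coe_eq_zero.mp this
          · rw [h2]
            intro hh
            apply hg
            have hc : ((g + g + g : G) : ℂ) = ((g + g : G) : ℂ) := by exact congrArg (fun t : G => (t : ℂ)) hh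
            push_cast at hc
            have : (g : ℂ) = 0 := by linear_combination hc
            exact ZeroMemClass.coe_eq_zero.mp this
          · rw [h2]
            push_cast
            intro hh
            apply hgC
            linear_combination -hh / 4
        · refine hPIdiagkey a g hg (fun hh => h1 hh.symm) ?_
          intro hh
          apply h2
          have : (a : ℂ) = ((g + g : G) : ℂ) := by push_cast; linear_combination hh
          exact Subtype.coe_injective this
    have hPI : ∀ b j : G, bas.repr (ψ (bas (DGHVIdx.L (b)))) (DGHVIdx.I (j)) = 0 := by
      intro b j
      by_cases hd : j = b + b
      · subst hd
        by_cases hb0 : b = 0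
        · subst hb0
          rw [add_zero]
          exact hs 0
        · exact hPIdiag b hb0
      · exact hPIoff b j hd
    -- CL-side coefficients of ψ(L_b)
    have hPCoff : ∀ b : G, b ≠ 0 → bas.repr (ψ (bas (DGHVIdx.L (b)))) (DGHVIdx.CL) = 0 := by
      intro b hb
      have hbC : (b : ℂ) ≠ 0 := fun hh => hb (ZeroMemClass.coe_eq_zero.mp hh)
      have h := eqELC bas hLL hLI hII hCL ψ hψ 0 b
      simp only [zero_add] at h
      rw [if_neg hb, hPL 0 (-b), if_neg (neg_ne_zero.mpr hb)] at h
      push_cast at h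
      have h' : (b : ℂ) * bas.repr (ψ (bas (DGHVIdx.L (b)))) (DGHVIdx.CL) = 0 := by linear_combination h
      exact (mul_eq_zero.mp h').resolve_left hbC
    have W1 := eqELC bas hLL hLI hII hCL ψ hψ g (-g)
    rw [add_neg_cancel, if_pos rfl, neg_neg, hPL g g, if_pos rfl,
      hPL (-g) (-g), if_pos rfl] at W1
    push_cast at W1
    have W2 := eqELC bas hLL hLI hII hCL ψ hψ (g + g) (-(g + g))
    rw [add_neg_cancel, if_pos rfl, neg_neg, hPL (g + g) (g + g), if_pos rfl,
      hPL (-(g + g)) (-(g + g)), if_pos rfl] at W2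
    push_cast at W2
    have hγ : bas.repr (ψ (bas (DGHVIdx.CL))) (DGHVIdx.CL) = bas.repr (ψ (bas (DGHVIdx.L (0)))) (DGHVIdx.L (0)) := by
      have h' : (g : ℂ) ^ 3 * (bas.repr (ψ (bas (DGHVIdx.CL))) (DGHVIdx.CL) - bas.repr (ψ (bas (DGHVIdx.L (0)))) (DGHVIdx.L (0))) = 0 := by
        linear_combination (-4 : ℂ) * W1 + 2 * W2
      have := (mul_eq_zero.mp h').resolve_left (pow_ne_zero 3 hgC)
      exact sub_eq_zero.mp this
    have hw : bas.repr (ψ (bas (DGHVIdx.L (0)))) (DGHVIdx.CL) = 0 := by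
      rw [hγ] at W1
      have h' : (g : ℂ) * bas.repr (ψ (bas (DGHVIdx.L (0)))) (DGHVIdx.CL) = 0 := by linear_combination -W1 / 2
      exact (mul_eq_zero.mp h').resolve_left hgC
    have hPC : ∀ b : G, bas.repr (ψ (bas (DGHVIdx.L (b)))) (DGHVIdx.CL) = 0 := by
      intro b
      by_cases hb0 : b = 0
      · subst hb0; exact hw
      · exact hPCoff b hb0
    -- assemble
    refine ⟨bas.repr (ψ (bas (DGHVIdx.L (0)))) (DGHVIdx.L (0)), bas.repr (ψ (bas (DGHVIdx.I (0)))) (DGHVIdx.CL), ?_⟩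
    apply bas.ext
    intro i
    rw [LinearMap.add_apply, LinearMap.smul_apply, LinearMap.smul_apply, LinearMap.id_apply,
      Module.Basis.constr_basis]
    apply bas.repr.injective
    ext k
    rw [map_add, map_smul, map_smul, Finsupp.add_apply, Finsupp.smul_apply, Finsupp.smul_apply,
      Module.Basis.repr_self]
    cases i with
    | L a =>
      cases k with
      | L b =>
        rw [hPL a b]
        by_cases hba : b = a
        · subst hba
          simp [Finsupp.single_apply]
        · simp [Finsupp.single_apply, hba, Ne.symm hba]
      | I b =>
        rw [hPI a b]
        simp [Finsupp.single_apply]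
      | CL =>
        rw [hPC a]
        simp [Finsupp.single_apply]
    | I a =>
      cases k with
      | L b =>
        rw [hQL a b]
        by_cases ha0 : a = 0 <;> simp [Finsupp.single_apply, ha0]
      | I b =>
        rw [hQI a b]
        by_cases hba : b = a
        · subst hba
          by_cases ha0 : b = 0 <;> simp [Finsupp.single_apply, ha0]
        · by_cases ha0 : a = 0 <;>
            simp [Finsupp.single_apply, hba, Ne.symm hba, ha0, eq_comm]
      | CL =>
        by_cases ha0 : a = 0
        · subst ha0
          simp [Finsupp.single_apply]
        · rw [hQC a ha0]
          simp [Finsupp.single_apply, ha0]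
    | CL =>
      cases k with
      | L b =>
        rw [hZL b]
        simp [Finsupp.single_apply]
      | I b =>
        rw [hZI b]
        simp [Finsupp.single_apply]
      | CL =>
        rw [hγ]
        simp [Finsupp.single_apply]
  · rintro ⟨α, α', rfl⟩ x y
    have hPhi : ∀ v : Lg, (bas.constr ℂ (fun idx => match idx with
          | DGHVIdx.L _ => 0
          | DGHVIdx.I a => if a = 0 then bas DGHVIdx.CL else 0
          | DGHVIdx.CL => (0 : Lg))) v = bas.repr v (DGHVIdx.I 0) • bas DGHVIdx.CL := by
      have hmap : (bas.constr ℂ (fun idx => match idx with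
          | DGHVIdx.L _ => 0
          | DGHVIdx.I a => if a = 0 then bas DGHVIdx.CL else 0
          | DGHVIdx.CL => (0 : Lg))) =
          (LinearMap.toSpanSingleton ℂ Lg (bas DGHVIdx.CL)).comp
            ((Finsupp.lapply (DGHVIdx.I 0)).comp (bas.repr : Lg →ₗ[ℂ] (DGHVIdx G →₀ ℂ))) := by
        apply bas.ext
        intro i
        rw [Module.Basis.constr_basis]
        cases i with
        | L a => simp [LinearMap.toSpanSingleton_apply, Finsupp.single_apply]
        | I a =>
          by_cases ha : a = 0
          · subst ha; simp [LinearMap.toSpanSingleton_apply, Finsupp.single_apply]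
          · simp [LinearMap.toSpanSingleton_apply, Finsupp.single_apply, ha]
        | CL => simp [LinearMap.toSpanSingleton_apply, Finsupp.single_apply]
      intro v
      rw [hmap]
      simp [LinearMap.toSpanSingleton_apply]
    have key : ∀ u v : Lg, bas.repr ⁅u, v⁆ (DGHVIdx.I 0) = 0 := by
      intro u v
      refine ext_basis_fun bas (f := fun w => bas.repr ⁅w, v⁆ (DGHVIdx.I 0))
        (g := fun _ => 0) ?_ ?_ ?_ u
      · constructor
        · intro u' v'; simp only [add_lie, map_add, Finsupp.add_apply]
        · intro r u'; simp only [smul_lie, map_smul, Finsupp.smul_apply, smul_eq_mul]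
      · exact ⟨fun _ _ => by simp, fun _ _ => by simp⟩
      · intro i
        cases i with
        | L a =>
          rw [repr_lieL_I bas hLL hLI hII hCL a 0 v]
          simp
        | I a =>
          rw [← lie_skew, map_neg, Finsupp.neg_apply, repr_lieI_I bas hLI hII hCL a 0 v]
          simp
        | CL => rw [hCL]; simp
    simp only [LinearMap.add_apply, LinearMap.smul_apply, LinearMap.id_apply]
    rw [hPhi ⁅x, y⁆, key x y, zero_smul, smul_zero, add_zero, hPhi x, hPhi y]
    rw [add_lie, lie_add, smul_lie, smul_lie, smul_lie, hCL, lie_smul, lie_smul, lie_smul, hxCL]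
    simp only [smul_zero, add_zero]
    module
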